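/- Let q be a prime power, β ∈ F_{q^2}, and α_1, ..., α_n distinct elements of F_q. Let A(γ_1,...,γ_n) denote the (n-1)×n matrix with (j,i)-entry γ_i^{j} for j = 0,...,n-2. Then the system A(β+α_1, ..., β+α_n) x^T = 0 has a nonzero solution in F_q^n. -/

import Mathlib

/-- Example 2.4: for `β ∈ F_{q²}` and distinct `α₁, …, α_n ∈ F_q`, the Vandermonde-type
system at the shifted points `β + α₁, …, β + α_n` has a nonzero solution in `F_qⁿ`. -/
theorem stmt5 {F : Type*} [Field F] [Fintype F] (q n : ℕ) (hF : Fintype.card F = q ^ 2)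
    (hn : 0 < n) (β : F) (α : Fin n → F) (hinj : Function.Injective α)
    (hFq : ∀ i, (α i) ^ q = α i) :
    ∃ x : Fin n → F, x ≠ 0 ∧
      (Matrix.of fun (j : Fin (n - 1)) (i : Fin n) => (β + α i) ^ (j : ℕ)).mulVec x = 0 ∧
      ∀ i, (x i) ^ q = x i := by
  classical
  set p := ringChar F with hpdef
  have hp : p.Prime := CharP.char_is_prime F p
  haveI := Fact.mk hp
  obtain ⟨k, _, hcard⟩ := FiniteField.card F p
  -- q = p ^ m for some m
  have hqdvd : q ∣ p ^ (k : ℕ) := by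
    rw [← hcard, hF]
    exact dvd_pow_self q two_ne_zero
  obtain ⟨m, _, hqm⟩ := (Nat.dvd_prime_pow hp).mp hqdvd
  -- the subring of elements fixed by x ↦ x ^ q
  set K : Subring F := RingHom.eqLocus (iterateFrobenius F p m) (RingHom.id F) with hK
  have hmem : ∀ y : F, y ∈ K ↔ y ^ q = y := by
    intro y
    rw [hqm]
    constructor
    · intro hy
      simpa [iterateFrobenius_def] using (show iterateFrobenius F p m y = RingHom.id F y from hy)
    · intro hy
      show iterateFrobenius F p m y = RingHom.id F y
      simpa [iterateFrobenius_def] using hy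
  haveI : Nontrivial K := ⟨0, 1, by simp [Subtype.ext_iff]⟩
  -- pigeonhole on the Vandermonde map over K
  let f : (Fin n → K) → (Fin (n - 1) → K) := fun y j =>
    ⟨∑ i, α i ^ (j : ℕ) * (y i : F), by
      refine Subring.sum_mem K fun i _ => Subring.mul_mem K ?_ ?_
      · exact Subring.pow_mem K ((hmem (α i)).mpr (hFq i)) _
      · exact (y i).2⟩
  have hcardlt : Fintype.card (Fin (n - 1) → K) < Fintype.card (Fin n → K) := by
    simp only [Fintype.card_fun, Fintype.card_fin]
    exact Nat.pow_lt_pow_right Fintype.one_lt_card (by omega)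
  obtain ⟨y, z, hyz, hfyz⟩ := Fintype.exists_ne_map_eq_of_card_lt f hcardlt
  refine ⟨fun i => (y i : F) - (z i : F), ?_, ?_, ?_⟩
  · intro h
    apply hyz
    funext i
    have h2 : (y i : F) - (z i : F) = 0 := congrFun h i
    exact Subtype.ext (sub_eq_zero.mp h2)
  · -- the kernel condition
    have key : ∀ r : ℕ, r < n - 1 → ∑ i, α i ^ r * ((y i : F) - (z i : F)) = 0 := by
      intro r hr
      have := congrFun hfyz ⟨r, hr⟩
      have h2 : ∑ i, α i ^ r * (y i : F) = ∑ i, α i ^ r * (z i : F) := by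
        simpa [f, Subtype.ext_iff] using this
      simp only [mul_sub, Finset.sum_sub_distrib, h2, sub_self]
    funext j
    have hjlt : (j : ℕ) < n - 1 := j.isLt
    show ∑ i, (β + α i) ^ (j : ℕ) * ((y i : F) - (z i : F)) = 0
    calc ∑ i, (β + α i) ^ (j : ℕ) * ((y i : F) - (z i : F))
        = ∑ i, ∑ s ∈ Finset.range ((j : ℕ) + 1),
            β ^ s * α i ^ ((j : ℕ) - s) * (Nat.choose j s : F) * ((y i : F) - (z i : F)) := by
          refine Finset.sum_congr rfl fun i _ => ?_
          rw [add_pow, Finset.sum_mul]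
      _ = ∑ s ∈ Finset.range ((j : ℕ) + 1),
            β ^ s * (Nat.choose j s : F) * ∑ i, α i ^ ((j : ℕ) - s) * ((y i : F) - (z i : F)) := by
          rw [Finset.sum_comm]
          refine Finset.sum_congr rfl fun s _ => ?_
          rw [Finset.mul_sum]
          refine Finset.sum_congr rfl fun i _ => ?_
          ring
      _ = 0 := by
          refine Finset.sum_eq_zero fun s _ => ?_
          rw [key _ (by omega), mul_zero]
  · intro i
    exact (hmem _).mp (Subring.sub_mem K (y i).2 (z i).2)
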